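/- Let L ≥ 1 and b : {1,...,L} → ℝ with |b(x)| < 1/2; set δ_x = 1/2 − b(x), \bar δ_x = 1/2 + b(x). Suppose ψ₀ : {0,...,L+1} → ℝ satisfies ψ₀(x) − (1/2)[ψ₀(x+1) + ψ₀(x−1)] − b(x)[ψ₀(x+1) − ψ₀(x−1)] = 0 for 1 ≤ x ≤ L, with boundary conditions ψ₀(0) = −ψ₀(1) and ψ₀(L+1) = 1 − ψ₀(L). Then 2ψ₀(1) = ∏_{k=1}^L \bar δ_k / ∑_{r=1}^L (∏_{j=1}^{r−1} δ_j)(∏_{j=r+1}^L \bar δ_j). -/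

import Mathlib

open Finset

theorem stmt_3 (L : ℕ) (hL : 1 ≤ L) (b : ℕ → ℝ)
    (hb : ∀ x, 1 ≤ x → x ≤ L → |b x| < 1/2)
    (ψ : ℕ → ℝ)
    (heq : ∀ x, 1 ≤ x → x ≤ L →
      ψ x - (1/2) * (ψ (x+1) + ψ (x-1)) - b x * (ψ (x+1) - ψ (x-1)) = 0)
    (hbc0 : ψ 0 = - ψ 1) (hbcL : ψ (L+1) = 1 - ψ L) :
    2 * ψ 1 = (∏ k ∈ Icc 1 L, (1/2 + b k)) /
      (∑ r ∈ Icc 1 L, (∏ j ∈ Icc 1 (r-1), (1/2 - b j)) * (∏ j ∈ Icc (r+1) L, (1/2 + b j))) := by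
  -- key difference identity
  have key : ∀ x, x ≤ L → (∏ j ∈ Icc 1 x, (1/2 + b j)) * (ψ (x+1) - ψ x)
      = 2 * ψ 1 * ∏ j ∈ Icc 1 x, (1/2 - b j) := by
    intro x
    induction x with
    | zero => intro _; simp [hbc0]; ring
    | succ n ih =>
      intro hn
      have h1 := ih (le_of_lt (Nat.lt_of_succ_le hn))
      have he := heq (n+1) (Nat.succ_le_succ (Nat.zero_le n)) hn
      simp only [Nat.add_sub_cancel] at he
      rw [Finset.prod_Icc_succ_top (Nat.succ_le_succ (Nat.zero_le n)),
          Finset.prod_Icc_succ_top (Nat.succ_le_succ (Nat.zero_le n))]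
      linear_combination (-1 : ℝ) * (∏ j ∈ Icc 1 n, (1/2 + b j)) * he + (1/2 - b (n+1)) * h1
  -- per-term identity
  have pt : ∀ x ∈ Icc 1 L, (∏ k ∈ Icc 1 L, (1/2 + b k)) * (ψ (x+1) - ψ (x-1))
      = 2 * ψ 1 * ((∏ j ∈ Icc 1 (x-1), (1/2 - b j)) * ∏ j ∈ Icc (x+1) L, (1/2 + b j)) := by
    intro x hx
    obtain ⟨h1, h2⟩ := mem_Icc.mp hx
    obtain ⟨y, rfl⟩ : ∃ y, x = y + 1 := ⟨x - 1, (Nat.succ_pred_eq_of_pos h1).symm⟩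
    simp only [Nat.add_sub_cancel]
    have k1 := key y (le_trans (Nat.le_succ y) h2)
    have k2 := key (y+1) h2
    rw [Finset.prod_Icc_succ_top (Nat.succ_le_succ (Nat.zero_le y)),
        Finset.prod_Icc_succ_top (Nat.succ_le_succ (Nat.zero_le y))] at k2
    have hsplit : (∏ k ∈ Icc 1 L, (1/2 + b k))
        = (∏ k ∈ Icc 1 (y+1), (1/2 + b k)) * ∏ k ∈ Icc (y+1+1) L, (1/2 + b k) := by
      rw [show Icc 1 L = Ioc 0 L from Finset.Icc_add_one_left_eq_Ioc (a := 0) (b := L), show Icc 1 (y+1) = Ioc 0 (y+1) from Finset.Icc_add_one_left_eq_Ioc (a := 0) (b := y+1), Finset.Icc_add_one_left_eq_Ioc]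
      exact (Finset.prod_Ioc_consecutive _ (Nat.zero_le _) h2).symm
    rw [Finset.prod_Icc_succ_top (Nat.succ_le_succ (Nat.zero_le y))] at hsplit
    rw [hsplit]
    linear_combination (∏ k ∈ Icc (y+1+1) L, (1/2 + b k)) * k2
      + (∏ k ∈ Icc (y+1+1) L, (1/2 + b k)) * (1/2 + b (y+1)) * k1
  -- telescoping sum
  have tele0 : ∀ n, ∑ x ∈ Icc 1 n, (ψ (x+1) - ψ (x-1)) = ψ (n+1) + ψ n - ψ 1 - ψ 0 := by
    intro n
    induction n with
    | zero => simp
    | succ m ih =>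
      rw [Finset.sum_Icc_succ_top (Nat.succ_le_succ (Nat.zero_le m)), ih]
      simp only [Nat.add_sub_cancel]
      ring
  have tele : ∑ x ∈ Icc 1 L, (ψ (x+1) - ψ (x-1)) = 1 := by
    rw [tele0, hbcL, hbc0]
    ring
  -- denominator positive
  have hS : 0 < ∑ r ∈ Icc 1 L, (∏ j ∈ Icc 1 (r-1), (1/2 - b j)) * ∏ j ∈ Icc (r+1) L, (1/2 + b j) := by
    apply Finset.sum_pos
    · intro r hr
      obtain ⟨hr1, hr2⟩ := mem_Icc.mp hr
      apply mul_pos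
      · apply Finset.prod_pos
        intro j hj
        obtain ⟨hj1, hj2⟩ := mem_Icc.mp hj
        have := hb j hj1 (by omega)
        rw [abs_lt] at this
        linarith [this.2]
      · apply Finset.prod_pos
        intro j hj
        obtain ⟨hj1, hj2⟩ := mem_Icc.mp hj
        have := hb j (by omega) hj2
        rw [abs_lt] at this
        linarith [this.1]
    · exact ⟨1, mem_Icc.mpr ⟨le_refl 1, hL⟩⟩
  rw [eq_div_iff hS.ne']
  calc 2 * ψ 1 * ∑ r ∈ Icc 1 L, (∏ j ∈ Icc 1 (r-1), (1/2 - b j)) * ∏ j ∈ Icc (r+1) L, (1/2 + b j)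
      = ∑ x ∈ Icc 1 L, (∏ k ∈ Icc 1 L, (1/2 + b k)) * (ψ (x+1) - ψ (x-1)) := by
        rw [Finset.mul_sum]
        exact Finset.sum_congr rfl (fun x hx => (pt x hx).symm)
    _ = (∏ k ∈ Icc 1 L, (1/2 + b k)) * ∑ x ∈ Icc 1 L, (ψ (x+1) - ψ (x-1)) := by
        rw [Finset.mul_sum]
    _ = ∏ k ∈ Icc 1 L, (1/2 + b k) := by rw [tele, mul_one]
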